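/- In the noise-free case, the fractional power control outage probability approximation q̃(λ, s) = 1 − exp(−λπd²β^δ E[H^δ]·E[H^{-sδ}]·E[H^{-(1-s)δ}]) is minimized over s ∈ [0,1] at s = 1/2, and correspondingly λ̃(ε, s) = −log(1−ε)/(πd²β^δ E[H^δ]E[H^{-sδ}]E[H^{-(1-s)δ}]) is maximized at s = 1/2. -/

import Mathlib

open MeasureTheory Real Set

/-- Noise-free case: the FPC outage probability approximation
`q̃(λ,s) = 1 - exp(-λ π d² β^δ E[H^δ] E[H^{-sδ}] E[H^{-(1-s)δ}])` is minimized over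
`s ∈ [0,1]` at `s = 1/2`, and correspondingly the transmission intensity
`λ̃(ε,s) = -log(1-ε) / (π d² β^δ E[H^δ] E[H^{-sδ}] E[H^{-(1-s)δ}])` is maximized at `s = 1/2`. -/
theorem statement17 {Ω : Type*} [MeasurableSpace Ω] (μ : Measure Ω) [IsProbabilityMeasure μ]
    (H : Ω → ℝ) (hHpos : ∀ ω, 0 < H ω) (δ : ℝ) (hδ : δ ∈ Set.Ioo (0 : ℝ) 1)
    (hint : ∀ t ∈ Set.Icc (-δ) δ, Integrable (fun ω => H ω ^ t) μ)
    (lam d β ε : ℝ) (hlam : 0 < lam) (hd : 0 < d) (hβ : 0 < β) (hε : ε ∈ Set.Ioo (0 : ℝ) 1) :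
    ∀ s ∈ Set.Icc (0 : ℝ) 1,
      (1 - Real.exp (-(lam * π * d ^ 2 * β ^ δ * (∫ ω, H ω ^ δ ∂μ)
            * (∫ ω, H ω ^ (-((1/2 : ℝ) * δ)) ∂μ) * ∫ ω, H ω ^ (-((1 - (1/2 : ℝ)) * δ)) ∂μ))
        ≤ 1 - Real.exp (-(lam * π * d ^ 2 * β ^ δ * (∫ ω, H ω ^ δ ∂μ)
            * (∫ ω, H ω ^ (-(s * δ)) ∂μ) * ∫ ω, H ω ^ (-((1 - s) * δ)) ∂μ))) ∧
      (-Real.log (1 - ε) / (π * d ^ 2 * β ^ δ * (∫ ω, H ω ^ δ ∂μ)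
            * (∫ ω, H ω ^ (-(s * δ)) ∂μ) * ∫ ω, H ω ^ (-((1 - s) * δ)) ∂μ)
        ≤ -Real.log (1 - ε) / (π * d ^ 2 * β ^ δ * (∫ ω, H ω ^ δ ∂μ)
            * (∫ ω, H ω ^ (-((1/2 : ℝ) * δ)) ∂μ) * ∫ ω, H ω ^ (-((1 - (1/2 : ℝ)) * δ)) ∂μ)) := by
  obtain ⟨hδ0, hδ1⟩ := hδ
  -- integrability of H^t for t ∈ [-δ, δ]
  have hintI : ∀ t : ℝ, |t| ≤ δ → Integrable (fun ω => H ω ^ t) μ := by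
    intro t ht
    exact hint t ⟨neg_le_of_abs_le ht, le_of_abs_le ht⟩
  -- positivity of such integrals
  have Ipos : ∀ t : ℝ, |t| ≤ δ → 0 < ∫ ω, H ω ^ t ∂μ := by
    intro t ht
    rw [integral_pos_iff_support_of_nonneg
        (fun ω => (Real.rpow_pos_of_pos (hHpos ω) t).le) (hintI t ht)]
    have : (Function.support fun ω => H ω ^ t) = Set.univ := by
      ext ω; simp [Function.mem_support, (Real.rpow_pos_of_pos (hHpos ω) t).ne']
    rw [this]
    simp
  -- the key Cauchy–Schwarz inequality
  have key : ∀ s ∈ Set.Icc (0 : ℝ) 1,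
      (∫ ω, H ω ^ (-((1/2 : ℝ) * δ)) ∂μ) * (∫ ω, H ω ^ (-((1 - (1/2 : ℝ)) * δ)) ∂μ)
        ≤ (∫ ω, H ω ^ (-(s * δ)) ∂μ) * ∫ ω, H ω ^ (-((1 - s) * δ)) ∂μ := by
    intro s ⟨hs0, hs1⟩
    have habs1 : |(-(s * δ))| ≤ δ := by
      rw [abs_neg, abs_of_nonneg (by positivity)]
      nlinarith
    have habs2 : |(-((1 - s) * δ))| ≤ δ := by
      rw [abs_neg, abs_of_nonneg (by nlinarith)]
      nlinarith
    have habs1' : |(-(s * δ) / 2)| ≤ δ := by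
      rw [abs_div]
      have := habs1
      simp only [abs_two]
      linarith [abs_nonneg (-(s * δ))]
    have habs2' : |(-((1 - s) * δ) / 2)| ≤ δ := by
      rw [abs_div]
      simp only [abs_two]
      linarith [abs_nonneg (-((1 - s) * δ))]
    set f : Ω → ℝ := fun ω => H ω ^ (-(s * δ) / 2) with hf
    set g : Ω → ℝ := fun ω => H ω ^ (-((1 - s) * δ) / 2) with hg
    have hfint : Integrable f μ := hintI _ habs1'
    have hgint : Integrable g μ := hintI _ habs2'
    have hf2 : MemLp f 2 μ := by
      rw [memLp_two_iff_integrable_sq hfint.1]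
      have : (fun ω => f ω ^ 2) = fun ω => H ω ^ (-(s * δ)) := by
        funext ω
        beta_reduce
        rw [sq, ← Real.rpow_add (hHpos ω)]
        ring_nf
      rw [this]
      exact hintI _ habs1
    have hg2 : MemLp g 2 μ := by
      rw [memLp_two_iff_integrable_sq hgint.1]
      have : (fun ω => g ω ^ 2) = fun ω => H ω ^ (-((1 - s) * δ)) := by
        funext ω
        beta_reduce
        rw [sq, ← Real.rpow_add (hHpos ω)]
        ring_nf
      rw [this]
      exact hintI _ habs2
    have hpq : (2 : ℝ).HolderConjugate 2 := by
      constructor <;> norm_num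
    have hCS := integral_mul_le_Lp_mul_Lq_of_nonneg (f := f) (g := g) hpq
      (Filter.Eventually.of_forall fun ω => (Real.rpow_pos_of_pos (hHpos ω) _).le)
      (Filter.Eventually.of_forall fun ω => (Real.rpow_pos_of_pos (hHpos ω) _).le)
      (by simpa using hf2) (by simpa using hg2)
    -- rewrite the left side
    have hfg : (fun ω => f ω * g ω) = fun ω => H ω ^ (-((1/2 : ℝ) * δ)) := by
      funext ω
      rw [hf, hg, ← Real.rpow_add (hHpos ω)]
      ring_nf
    have hfp : (fun ω => f ω ^ (2 : ℝ)) = fun ω => H ω ^ (-(s * δ)) := by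
      funext ω
      show (H ω ^ (-(s * δ) / 2)) ^ (2 : ℝ) = H ω ^ (-(s * δ))
      rw [← Real.rpow_mul (hHpos ω).le]
      norm_num
    have hgp : (fun ω => g ω ^ (2 : ℝ)) = fun ω => H ω ^ (-((1 - s) * δ)) := by
      funext ω
      show (H ω ^ (-((1 - s) * δ) / 2)) ^ (2 : ℝ) = H ω ^ (-((1 - s) * δ))
      rw [← Real.rpow_mul (hHpos ω).le]
      ring_nf
    simp only [hfg, hfp, hgp] at hCS
    have heq : (-((1 - (1/2 : ℝ)) * δ)) = -((1/2 : ℝ) * δ) := by ring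
    rw [heq]
    have hI1 : (0 : ℝ) ≤ ∫ ω, H ω ^ (-(s * δ)) ∂μ := (Ipos _ habs1).le
    have hI2 : (0 : ℝ) ≤ ∫ ω, H ω ^ (-((1 - s) * δ)) ∂μ := (Ipos _ habs2).le
    calc (∫ ω, H ω ^ (-((1/2 : ℝ) * δ)) ∂μ) * (∫ ω, H ω ^ (-((1/2 : ℝ) * δ)) ∂μ)
        ≤ ((∫ ω, H ω ^ (-(s * δ)) ∂μ) ^ (1/(2:ℝ)) * (∫ ω, H ω ^ (-((1 - s) * δ)) ∂μ) ^ (1/(2:ℝ)))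
          * ((∫ ω, H ω ^ (-(s * δ)) ∂μ) ^ (1/(2:ℝ)) * (∫ ω, H ω ^ (-((1 - s) * δ)) ∂μ) ^ (1/(2:ℝ))) := by
          apply mul_le_mul hCS hCS (integral_nonneg fun ω => (Real.rpow_pos_of_pos (hHpos ω) _).le)
          positivity
      _ = (∫ ω, H ω ^ (-(s * δ)) ∂μ) * ∫ ω, H ω ^ (-((1 - s) * δ)) ∂μ := by
          rw [show ((∫ ω, H ω ^ (-(s * δ)) ∂μ) ^ (1/(2:ℝ)) * (∫ ω, H ω ^ (-((1 - s) * δ)) ∂μ) ^ (1/(2:ℝ)))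
              * ((∫ ω, H ω ^ (-(s * δ)) ∂μ) ^ (1/(2:ℝ)) * (∫ ω, H ω ^ (-((1 - s) * δ)) ∂μ) ^ (1/(2:ℝ)))
              = ((∫ ω, H ω ^ (-(s * δ)) ∂μ) ^ (1/(2:ℝ)) * (∫ ω, H ω ^ (-(s * δ)) ∂μ) ^ (1/(2:ℝ)))
              * ((∫ ω, H ω ^ (-((1 - s) * δ)) ∂μ) ^ (1/(2:ℝ)) * (∫ ω, H ω ^ (-((1 - s) * δ)) ∂μ) ^ (1/(2:ℝ))) by ring,
            ← Real.rpow_add (Ipos _ habs1), ← Real.rpow_add (Ipos _ habs2)]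
          norm_num
  intro s hs
  obtain ⟨hs0, hs1⟩ := hs
  have habs1 : |(-(s * δ))| ≤ δ := by
    rw [abs_neg, abs_of_nonneg (by positivity)]
    nlinarith
  have habs2 : |(-((1 - s) * δ))| ≤ δ := by
    rw [abs_neg, abs_of_nonneg (by nlinarith)]
    nlinarith
  have habsh : |(-((1/2 : ℝ) * δ))| ≤ δ := by
    rw [abs_neg, abs_of_nonneg (by positivity)]
    linarith
  have habsh2 : |(-((1 - (1/2 : ℝ)) * δ))| ≤ δ := by
    norm_num
    rw [abs_of_nonneg (by positivity)]
    linarith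
  have hEδ : 0 < ∫ ω, H ω ^ δ ∂μ := by
    apply Ipos
    rw [abs_of_nonneg hδ0.le]
  have hkey := key s ⟨hs0, hs1⟩
  have hπ : (0 : ℝ) < π := Real.pi_pos
  have hph1 := Ipos _ habsh
  have hph2 := Ipos _ habsh2
  constructor
  · -- outage probability
    have hA : (0 : ℝ) < lam * π * d ^ 2 * β ^ δ * (∫ ω, H ω ^ δ ∂μ) := by positivity
    have hmain : lam * π * d ^ 2 * β ^ δ * (∫ ω, H ω ^ δ ∂μ)
        * (∫ ω, H ω ^ (-((1/2 : ℝ) * δ)) ∂μ) * (∫ ω, H ω ^ (-((1 - (1/2 : ℝ)) * δ)) ∂μ)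
        ≤ lam * π * d ^ 2 * β ^ δ * (∫ ω, H ω ^ δ ∂μ)
        * (∫ ω, H ω ^ (-(s * δ)) ∂μ) * (∫ ω, H ω ^ (-((1 - s) * δ)) ∂μ) := by
      rw [mul_assoc (lam * π * d ^ 2 * β ^ δ * (∫ ω, H ω ^ δ ∂μ)),
        mul_assoc (lam * π * d ^ 2 * β ^ δ * (∫ ω, H ω ^ δ ∂μ))]
      exact mul_le_mul_of_nonneg_left hkey hA.le
    have := Real.exp_le_exp.mpr (neg_le_neg hmain)
    linarith
  · -- intensity
    have hlog : (0 : ℝ) ≤ -Real.log (1 - ε) := by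
      have : Real.log (1 - ε) ≤ 0 :=
        Real.log_nonpos (by linarith [hε.2]) (by linarith [hε.1])
      linarith
    have hB : (0 : ℝ) < π * d ^ 2 * β ^ δ * (∫ ω, H ω ^ δ ∂μ) := by positivity
    apply div_le_div_of_nonneg_left hlog
    · positivity
    · rw [mul_assoc (π * d ^ 2 * β ^ δ * (∫ ω, H ω ^ δ ∂μ)),
        mul_assoc (π * d ^ 2 * β ^ δ * (∫ ω, H ω ^ δ ∂μ))]
      exact mul_le_mul_of_nonneg_left hkey hB.le
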